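/- Gram matrix correspondence for univariate polynomials: let p in ℝ[x] have degree at most 2d. Then p is a sum of squares of polynomials if and only if there exists a positive semidefinite real (d+1)×(d+1) matrix A = (a_{ij})_{0<=i,j<=d} such that for every k with 0 <= k <= 2d, the coefficient of x^k in p equals the antidiagonal sum Σ_{i+j=k} a_{ij}. Moreover, p is a sum of at most r squares if and only if such a matrix A can be chosen with rank at most r. -/

import Mathlib

open Polynomial Matrix Finset

namespace SosGramAux

/-- The polynomial associated to a Gram matrix. -/
noncomputable def polyOf {d : ℕ} (A : Matrix (Fin (d + 1)) (Fin (d + 1)) ℝ) : Polynomial ℝ :=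
  ∑ i : Fin (d + 1), ∑ j : Fin (d + 1), C (A i j) * X ^ ((i : ℕ) + (j : ℕ))

lemma coeff_polyOf {d : ℕ} (A : Matrix (Fin (d + 1)) (Fin (d + 1)) ℝ) (k : ℕ) :
    (polyOf A).coeff k = ∑ i : Fin (d + 1), ∑ j : Fin (d + 1),
      if (i : ℕ) + (j : ℕ) = k then A i j else 0 := by
  simp [polyOf, Polynomial.finset_sum_coeff, coeff_C_mul, coeff_X_pow, mul_ite, eq_comm]

lemma coeff_polyOf_eq_zero {d : ℕ} (A : Matrix (Fin (d + 1)) (Fin (d + 1)) ℝ) {k : ℕ}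
    (hk : 2 * d < k) : (polyOf A).coeff k = 0 := by
  rw [coeff_polyOf]
  refine Finset.sum_eq_zero fun i _ => Finset.sum_eq_zero fun j _ => ?_
  have hi := i.is_le
  have hj := j.is_le
  rw [if_neg (by omega)]

lemma polyOf_add {d : ℕ} (M N : Matrix (Fin (d + 1)) (Fin (d + 1)) ℝ) :
    polyOf (M + N) = polyOf M + polyOf N := by
  unfold polyOf
  rw [← Finset.sum_add_distrib]
  refine Finset.sum_congr rfl fun i _ => ?_
  rw [← Finset.sum_add_distrib]
  refine Finset.sum_congr rfl fun j _ => ?_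
  simp [add_mul]

lemma polyOf_sum {d : ℕ} {ι : Type*} (s : Finset ι)
    (M : ι → Matrix (Fin (d + 1)) (Fin (d + 1)) ℝ) :
    polyOf (∑ t ∈ s, M t) = ∑ t ∈ s, polyOf (M t) := by
  classical
  induction s using Finset.induction with
  | empty => simp [polyOf]
  | insert _ _ h ih => rw [Finset.sum_insert h, Finset.sum_insert h, ← ih, polyOf_add]

lemma sq_eq_polyOf {d : ℕ} (v : Fin (d + 1) → ℝ) :
    (∑ i : Fin (d + 1), C (v i) * X ^ (i : ℕ)) ^ 2 = polyOf (vecMulVec v v) := by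
  rw [sq, Finset.sum_mul_sum, polyOf]
  refine Finset.sum_congr rfl fun i _ => Finset.sum_congr rfl fun j _ => ?_
  simp only [vecMulVec_apply, pow_add, _root_.map_mul]
  ring

lemma eq_sum_coeff {d : ℕ} {q : Polynomial ℝ} (hq : q.natDegree ≤ d) :
    q = ∑ j : Fin (d + 1), C (q.coeff j) * X ^ (j : ℕ) := by
  ext k
  rw [Polynomial.finset_sum_coeff]
  simp only [coeff_C_mul, coeff_X_pow, mul_ite, mul_one, mul_zero]
  by_cases hk : k ≤ d
  · rw [Finset.sum_eq_single (⟨k, by omega⟩ : Fin (d + 1))]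
    · simp
    · intro j _ hj
      rw [if_neg fun h => hj (Fin.ext (by simp; omega))]
    · simp
  · rw [Finset.sum_eq_zero fun j _ => ?_, coeff_eq_zero_of_natDegree_lt (by omega)]
    have := j.is_le
    rw [if_neg (by omega)]

lemma conjTranspose_mul_self_eq_sum {d r : ℕ} (B : Matrix (Fin r) (Fin (d + 1)) ℝ) :
    Bᴴ * B = ∑ t : Fin r, vecMulVec (B t) (B t) := by
  ext i j
  simp [Matrix.mul_apply, Matrix.sum_apply, vecMulVec_apply, conjTranspose_apply]

lemma coeff_sq_two_mul {q : Polynomial ℝ} {m : ℕ} (hq : q.natDegree ≤ m) :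
    (q ^ 2).coeff (m + m) = q.coeff m ^ 2 := by
  rw [sq, coeff_mul, sq, Finset.sum_eq_single (m, m)]
  · rintro ⟨a, b⟩ hab hne
    rw [Finset.HasAntidiagonal.mem_antidiagonal] at hab
    rcases lt_trichotomy a m with h | h | h
    · have hb : m < b := by omega
      rw [coeff_eq_zero_of_natDegree_lt (lt_of_le_of_lt hq hb), mul_zero]
    · exact absurd (by simp [Prod.ext_iff]; omega : (a, b) = (m, m)) hne
    · rw [coeff_eq_zero_of_natDegree_lt (lt_of_le_of_lt hq h), zero_mul]
  · intro h
    exact absurd (Finset.HasAntidiagonal.mem_antidiagonal.mpr rfl : (m, m) ∈ Finset.HasAntidiagonal.antidiagonal (m + m)) h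

lemma natDegree_le_of_sum_sq {d r : ℕ} {q : Fin r → Polynomial ℝ} {p : Polynomial ℝ}
    (hp : p = ∑ i, q i ^ 2) (hdeg : p.natDegree ≤ 2 * d) (t : Fin r) :
    (q t).natDegree ≤ d := by
  by_contra hgt
  push_neg at hgt
  set m := Finset.univ.sup fun i => (q i).natDegree with hm
  have hmt : (q t).natDegree ≤ m := by
    rw [hm]; exact Finset.le_sup (f := fun i => (q i).natDegree) (Finset.mem_univ t)
  have hdm : d < m := lt_of_lt_of_le hgt hmt
  obtain ⟨t0, -, ht0⟩ := Finset.exists_mem_eq_sup Finset.univ ⟨t, Finset.mem_univ t⟩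
    fun i => (q i).natDegree
  rw [← hm] at ht0
  have hq0 : q t0 ≠ 0 := by
    intro h
    rw [h, natDegree_zero] at ht0
    omega
  have hcoeff : p.coeff (m + m) = ∑ i, (q i).coeff m ^ 2 := by
    rw [hp, Polynomial.finset_sum_coeff]
    exact Finset.sum_congr rfl fun i _ =>
      coeff_sq_two_mul (by
        rw [hm]; exact Finset.le_sup (f := fun i => (q i).natDegree) (Finset.mem_univ i))
  have hzero : p.coeff (m + m) = 0 := coeff_eq_zero_of_natDegree_lt (by omega)
  have hnn : ∀ i ∈ Finset.univ, (0 : ℝ) ≤ (q i).coeff m ^ 2 := fun i _ => sq_nonneg _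
  have h0 := (Finset.sum_eq_zero_iff_of_nonneg hnn).mp (hcoeff ▸ hzero) t0 (Finset.mem_univ t0)
  have hc0 : (q t0).coeff m = 0 := by
    have := sq_nonneg ((q t0).coeff m)
    nlinarith
  rw [ht0] at hc0
  exact hq0 (leadingCoeff_eq_zero.mp hc0)

lemma psd_decomp {n r : ℕ} {A : Matrix (Fin n) (Fin n) ℝ} (hA : A.PosSemidef)
    (hr : A.rank ≤ r) :
    ∃ v : Fin r → (Fin n → ℝ), A = ∑ t, vecMulVec (v t) (v t) := by
  classical
  have hH := hA.1
  set lam := hH.eigenvalues with hlam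
  set U : Matrix (Fin n) (Fin n) ℝ := (hH.eigenvectorUnitary : Matrix (Fin n) (Fin n) ℝ) with hU
  have hentry : ∀ i j, A i j = ∑ k, lam k * (U i k * U j k) := by
    intro i j
    conv_lhs => rw [hH.spectral_theorem, Unitary.conjStarAlgAut_apply]
    simp only [Matrix.mul_apply, Matrix.diagonal_apply, Finset.sum_mul, mul_ite, mul_zero,
      ite_mul, zero_mul, Finset.sum_ite_eq, Finset.mem_univ, if_true]
    refine Finset.sum_congr rfl fun k _ => ?_
    simp [hU, hlam, Matrix.IsHermitian.eigenvectorUnitary_apply]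
    ring
  set w : Fin n → Fin n → ℝ := fun k i => Real.sqrt (lam k) * U i k with hw
  have hw0 : ∀ k, lam k = 0 → w k = 0 := by
    intro k hk
    funext i
    simp [hw, hk]
  have hAsum : A = ∑ k, vecMulVec (w k) (w k) := by
    ext i j
    rw [hentry i j, Matrix.sum_apply]
    refine Finset.sum_congr rfl fun k _ => ?_
    have hnn : 0 ≤ lam k := hA.eigenvalues_nonneg k
    simp only [vecMulVec_apply, hw]
    rw [show Real.sqrt (lam k) * U i k * (Real.sqrt (lam k) * U j k)
        = (Real.sqrt (lam k) * Real.sqrt (lam k)) * (U i k * U j k) by ring,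
      Real.mul_self_sqrt hnn]
  have hcard : Fintype.card {k // lam k ≠ 0} ≤ r := by
    rw [← hH.rank_eq_card_non_zero_eigs] at *
    exact hr
  obtain ⟨e⟩ := Function.Embedding.nonempty_of_card_le (by simpa using hcard :
    Fintype.card {k // lam k ≠ 0} ≤ Fintype.card (Fin r))
  set v : Fin r → Fin n → ℝ := fun t =>
    if h : ∃ k : {k // lam k ≠ 0}, e k = t then w (h.choose : Fin n) else 0 with hv
  refine ⟨v, ?_⟩
  rw [hAsum]
  have step1 : ∑ k : Fin n, vecMulVec (w k) (w k)
      = ∑ k ∈ Finset.univ.filter (fun k => lam k ≠ 0), vecMulVec (w k) (w k) := by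
    refine (Finset.sum_filter_of_ne fun k _ hne => ?_).symm
    intro hk
    exact hne (by rw [hw0 k hk]; ext i j; simp [vecMulVec_apply])
  have step2 : ∑ k ∈ Finset.univ.filter (fun k => lam k ≠ 0), vecMulVec (w k) (w k)
      = ∑ k : {k // lam k ≠ 0}, vecMulVec (w (k : Fin n)) (w (k : Fin n)) :=
    (Finset.sum_subtype _ (by simp) _)
  have step3 : ∑ k : {k // lam k ≠ 0}, vecMulVec (w (k : Fin n)) (w (k : Fin n))
      = ∑ t ∈ Finset.univ.map e, vecMulVec (v t) (v t) := by
    rw [Finset.sum_map]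
    refine Finset.sum_congr rfl fun k _ => ?_
    have hex : ∃ k' : {k // lam k ≠ 0}, e k' = e k := ⟨k, rfl⟩
    have : hex.choose = k := e.injective hex.choose_spec
    simp only [hv, dif_pos hex, this]
  have step4 : ∑ t ∈ Finset.univ.map e, vecMulVec (v t) (v t)
      = ∑ t : Fin r, vecMulVec (v t) (v t) := by
    refine Finset.sum_subset (Finset.subset_univ _) fun t _ ht => ?_
    have hne : ¬ ∃ k : {k // lam k ≠ 0}, e k = t := by
      intro ⟨k, hk⟩
      exact ht (Finset.mem_map.mpr ⟨k, Finset.mem_univ k, hk⟩)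
    simp only [hv, dif_neg hne]
    ext i j
    simp [vecMulVec_apply]
  rw [step1, step2, step3, step4]

lemma gram_rank (d : ℕ) (p : Polynomial ℝ) (hdeg : p.natDegree ≤ 2 * d) (r : ℕ) :
    (∃ q : Fin r → Polynomial ℝ, p = ∑ i, (q i) ^ 2) ↔
    ∃ A : Matrix (Fin (d + 1)) (Fin (d + 1)) ℝ, A.PosSemidef ∧
      (∀ k ≤ 2 * d, p.coeff k =
        ∑ i : Fin (d + 1), ∑ j : Fin (d + 1),
          if (i : ℕ) + (j : ℕ) = k then A i j else 0) ∧
      A.rank ≤ r := by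
  constructor
  · rintro ⟨q, hq⟩
    have hdq : ∀ t, (q t).natDegree ≤ d := natDegree_le_of_sum_sq hq hdeg
    set B : Matrix (Fin r) (Fin (d + 1)) ℝ := fun t j => (q t).coeff j with hB
    refine ⟨Bᴴ * B, posSemidef_conjTranspose_mul_self B, ?_, ?_⟩
    · have hpoly : p = polyOf (Bᴴ * B) := by
        rw [conjTranspose_mul_self_eq_sum, polyOf_sum, hq]
        refine Finset.sum_congr rfl fun t _ => ?_
        rw [← sq_eq_polyOf]
        congr 1
        exact eq_sum_coeff (hdq t)
      intro k _
      rw [hpoly, coeff_polyOf]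
    · rw [Matrix.rank_conjTranspose_mul_self]
      exact B.rank_le_card_height.trans (by simp)
  · rintro ⟨A, hA, hcoeff, hrank⟩
    obtain ⟨v, hv⟩ := psd_decomp hA hrank
    refine ⟨fun t => ∑ j : Fin (d + 1), C (v t j) * X ^ (j : ℕ), ?_⟩
    have : ∑ t : Fin r, (∑ j : Fin (d + 1), C (v t j) * X ^ (j : ℕ)) ^ 2 = polyOf A := by
      rw [show polyOf A = polyOf (∑ t, vecMulVec (v t) (v t)) from by rw [← hv], polyOf_sum]
      exact Finset.sum_congr rfl fun t _ => sq_eq_polyOf (v t)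
    rw [this]
    ext k
    by_cases hk : k ≤ 2 * d
    · rw [hcoeff k hk, coeff_polyOf]
    · rw [coeff_eq_zero_of_natDegree_lt (by omega), coeff_polyOf_eq_zero A (by omega)]

end SosGramAux

/-- Gram matrix correspondence for univariate polynomials: a polynomial of degree at
most `2d` is a sum of squares iff its coefficients are the antidiagonal sums of a PSD
`(d+1) × (d+1)` matrix; and it is a sum of at most `r` squares iff such a matrix can be
chosen with rank at most `r`. -/
theorem sos_iff_gram_matrix (d : ℕ) (p : Polynomial ℝ) (hdeg : p.natDegree ≤ 2 * d) :
    ((∃ (k : ℕ) (q : Fin k → Polynomial ℝ), p = ∑ i, (q i) ^ 2) ↔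
      ∃ A : Matrix (Fin (d + 1)) (Fin (d + 1)) ℝ, A.PosSemidef ∧
        ∀ k ≤ 2 * d, p.coeff k =
          ∑ i : Fin (d + 1), ∑ j : Fin (d + 1),
            if (i : ℕ) + (j : ℕ) = k then A i j else 0) ∧
    (∀ r : ℕ,
      (∃ q : Fin r → Polynomial ℝ, p = ∑ i, (q i) ^ 2) ↔
      ∃ A : Matrix (Fin (d + 1)) (Fin (d + 1)) ℝ, A.PosSemidef ∧
        (∀ k ≤ 2 * d, p.coeff k =
          ∑ i : Fin (d + 1), ∑ j : Fin (d + 1),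
            if (i : ℕ) + (j : ℕ) = k then A i j else 0) ∧
        A.rank ≤ r) := by
  constructor
  · constructor
    · rintro ⟨k, q, hq⟩
      obtain ⟨A, hA, hc, -⟩ := (SosGramAux.gram_rank d p hdeg k).mp ⟨q, hq⟩
      exact ⟨A, hA, hc⟩
    · rintro ⟨A, hA, hc⟩
      have hrank : A.rank ≤ d + 1 := A.rank_le_card_height.trans (by simp)
      obtain ⟨q, hq⟩ := (SosGramAux.gram_rank d p hdeg (d + 1)).mpr ⟨A, hA, hc, hrank⟩
      exact ⟨d + 1, q, hq⟩
  · exact SosGramAux.gram_rank d p hdeg
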